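/- Let −∞ ≤ a < b ≤ ∞ and let I be one of the intervals (a,b), (a,b], [a,b), [a,b]. Let λ₁, λ₂ : I → ℂ be continuous and let A(t) be the diagonal matrix with entries λ₁(t), λ₂(t). Suppose that κ₁₃(t) := max{ ∫_t^b e^{−∫_t^s Re λ₁(τ) dτ} ds, ∫_a^t e^{∫_s^t Re λ₂(τ) dτ} ds } exists (both integrals finite, possibly improper) for all t ∈ I, and that K₁₃ := sup_{t∈I} κ₁₃(t) < ∞. Then the system x' = A(t)x is Ulam stable on I with Ulam constant K₁₃ (with respect to the maximum norm on ℂ²). Furthermore, if in addition lim_{t→b⁻} ∫_{t₀}^t Re λ₁(s) ds = ∞ and lim_{t→a⁺} ∫_{t₀}^t Re λ₂(s) ds = ∞ for t₀ ∈ (a,b), then for every ε > 0 and every continuously differentiable φ : I → ℂ² with sup_{t∈I} ‖φ'(t) − A(t)φ(t)‖∞ ≤ ε, there exists a unique solution x of x' = A(t)x satisfying sup_{t∈I} ‖φ(t) − x(t)‖∞ ≤ K₁₃ε. -/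

import Mathlib

open MeasureTheory Filter Set

noncomputable section

/-- Ulam stability on `I` with constant `K` for the system `x' = A(t) x` on `ℂ²`,
with respect to the maximum norm (the sup norm on `Fin 2 → ℂ`). -/
def UlamStable2C (I : Set ℝ) (A : ℝ → Matrix (Fin 2) (Fin 2) ℂ) (K : ℝ) : Prop :=
  0 < K ∧
  ∀ ε : ℝ, 0 < ε →
    ∀ φ φd : ℝ → Fin 2 → ℂ,
      (∀ t ∈ I, HasDerivWithinAt φ (φd t) I t) →
      ContinuousOn φd I →
      (∀ t ∈ I, ‖φd t - (A t).mulVec (φ t)‖ ≤ ε) →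
      ∃ x : ℝ → Fin 2 → ℂ,
        (∀ t ∈ I, HasDerivWithinAt x ((A t).mulVec (x t)) I t) ∧
        ∀ t ∈ I, ‖φ t - x t‖ ≤ K * ε

/-- `κ₁₃(t)`. -/
def kappa13 (a b : EReal) (l1 l2 : ℝ → ℂ) (t : ℝ) : ℝ :=
  max (∫ s in {s : ℝ | t < s ∧ (s : EReal) < b}, Real.exp (-∫ τ in t..s, (l1 τ).re))
    (∫ s in {s : ℝ | a < (s : EReal) ∧ s < t}, Real.exp (∫ τ in s..t, (l2 τ).re))

section UlamAux

open intervalIntegral Topology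

lemma my_hasDerivWithinAt_singleton {E : Type*} [NormedAddCommGroup E] [NormedSpace ℝ E]
    (f : ℝ → E) (d : E) (t : ℝ) : HasDerivWithinAt f d {t} t := by
  rw [HasDerivWithinAt, HasDerivAtFilter]
  rw [nhdsWithin_singleton]
  rw [hasFDerivAtFilter_iff_isLittleO]
  simp [Asymptotics.isLittleO_pure]

/-- FTC within an order-connected set. -/
lemma ftc_within {E : Type*} [NormedAddCommGroup E] [NormedSpace ℝ E] [CompleteSpace E]
    {I : Set ℝ} (hI : OrdConnected I) {f : ℝ → E} (hf : ContinuousOn f I)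
    {t₀ t : ℝ} (ht₀ : t₀ ∈ I) (ht : t ∈ I) :
    HasDerivWithinAt (fun u => ∫ x in t₀..u, f x) (f t) I t := by
  have hint : IntervalIntegrable f volume t₀ t :=
    (hf.mono (hI.uIcc_subset ht₀ ht)).intervalIntegrable
  have hright : HasDerivWithinAt (fun u => ∫ x in t₀..u, f x) (f t) (I ∩ Ici t) t := by
    by_cases hu : ∃ u ∈ I, t < u
    · obtain ⟨u, huI, htu⟩ := hu
      have hIoo : Ioo t u ⊆ I := fun s hs => hI.out ht huI ⟨hs.1.le, hs.2.le⟩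
      have hIooMem : Ioo t u ∈ 𝓝[>] t := by
        rw [show Ioo t u = Ioi t ∩ Iio u from rfl]
        exact inter_mem_nhdsWithin _ (Iio_mem_nhds htu)
      have hmeas : StronglyMeasurableAtFilter f (𝓝[>] t) :=
        ⟨Ioo t u, hIooMem, ((hf.mono hIoo).aestronglyMeasurable measurableSet_Ioo)⟩
      have hcont : ContinuousWithinAt f (Ioi t) t := by
        have h1 : ContinuousWithinAt f (Ioo t u) t := (hf t ht).mono hIoo
        have h2 : Ioi t ∩ Ioo t u = Ioo t u :=
          inter_eq_self_of_subset_right (fun s hs => hs.1)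
        rw [ContinuousWithinAt, nhdsWithin_restrict'' (Ioi t) hIooMem, h2]
        exact h1
      exact (integral_hasDerivWithinAt_right hint hmeas hcont
        (s := Ici t)).mono inter_subset_right
    · push_neg at hu
      have hss : I ∩ Ici t ⊆ {t} := fun s hs => le_antisymm (hu s hs.1) hs.2
      exact (my_hasDerivWithinAt_singleton _ _ t).mono hss
  have hleft : HasDerivWithinAt (fun u => ∫ x in t₀..u, f x) (f t) (I ∩ Iic t) t := by
    by_cases hu : ∃ u ∈ I, u < t
    · obtain ⟨u, huI, htu⟩ := hu
      have hIoc : Ioc u t ⊆ I := fun s hs => hI.out huI ht ⟨hs.1.le, hs.2⟩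
      have hIocMem : Ioc u t ∈ 𝓝[≤] t := by
        rw [show Ioc u t = Iic t ∩ Ioi u by ext s; exact ⟨fun h => ⟨h.2, h.1⟩, fun h => ⟨h.2, h.1⟩⟩]
        exact inter_mem_nhdsWithin _ (Ioi_mem_nhds htu)
      have hmeas : StronglyMeasurableAtFilter f (𝓝[≤] t) :=
        ⟨Ioc u t, hIocMem, ((hf.mono hIoc).aestronglyMeasurable measurableSet_Ioc)⟩
      have hcont : ContinuousWithinAt f (Iic t) t := by
        have h1 : ContinuousWithinAt f (Ioc u t) t := (hf t ht).mono hIoc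
        have h2 : Iic t ∩ Ioc u t = Ioc u t :=
          inter_eq_self_of_subset_right (fun s hs => hs.2)
        rw [ContinuousWithinAt, nhdsWithin_restrict'' (Iic t) hIocMem, h2]
        exact h1
      exact (integral_hasDerivWithinAt_right hint hmeas hcont
        (s := Iic t)).mono inter_subset_right
    · push_neg at hu
      have hss : I ∩ Iic t ⊆ {t} := fun s hs => le_antisymm hs.2 (hu s hs.1)
      exact (my_hasDerivWithinAt_singleton _ _ t).mono hss
  have hcomb := hright.union hleft
  have hIeq : (I ∩ Ici t) ∪ (I ∩ Iic t) = I := by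
    ext s; constructor
    · rintro (⟨h, _⟩ | ⟨h, _⟩) <;> exact h
    · intro hs; rcases le_total t s with h | h
      · exact Or.inl ⟨hs, h⟩
      · exact Or.inr ⟨hs, h⟩
  rwa [hIeq] at hcomb

lemma scalar_right (b : EReal) (I : Set ℝ) (hord : OrdConnected I)
    (hI2 : ∀ x ∈ I, (x : EReal) ≤ b)
    (hIb : ∀ t ∈ I, {s : ℝ | t < s ∧ (s : EReal) < b} ⊆ I)
    {t₀ : ℝ} (ht₀ : t₀ ∈ I)
    (l : ℝ → ℂ) (hl : ContinuousOn l I)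
    (hker : ∀ t ∈ I, IntegrableOn
      (fun s => Real.exp (-∫ τ in t..s, (l τ).re)) {s : ℝ | t < s ∧ (s : EReal) < b})
    {ε : ℝ} (q φ : ℝ → ℂ) (hq : ContinuousOn q I) (hqε : ∀ t ∈ I, ‖q t‖ ≤ ε)
    (hφ : ∀ t ∈ I, HasDerivWithinAt φ (l t * φ t + q t) I t) :
    ∃ x : ℝ → ℂ, (∀ t ∈ I, HasDerivWithinAt x (l t * x t) I t) ∧
      (∀ t ∈ I, ‖φ t - x t‖ ≤
        ε * ∫ s in {s : ℝ | t < s ∧ (s : EReal) < b}, Real.exp (-∫ τ in t..s, (l τ).re)) := by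
  -- basic sets
  set D : ℝ → Set ℝ := fun t => {s : ℝ | t < s ∧ (s : EReal) < b} with hD
  have hD_meas : ∀ t : ℝ, MeasurableSet (D t) := by
    intro t
    have : D t = Ioi t ∩ (fun s : ℝ => (s : EReal)) ⁻¹' (Iio b) := rfl
    rw [this]
    exact measurableSet_Ioi.inter ((continuous_coe_real_ereal.measurable) measurableSet_Iio)
  -- integrals of l
  have hsub : ∀ t ∈ I, uIcc t₀ t ⊆ I := fun t ht => hord.uIcc_subset ht₀ ht
  have hsub2 : ∀ t ∈ I, ∀ s ∈ I, uIcc t s ⊆ I := fun t ht s hs => hord.uIcc_subset ht hs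
  have hlre : ContinuousOn (fun τ => (l τ).re) I := Complex.continuous_re.comp_continuousOn hl
  set Λ : ℝ → ℂ := fun u => ∫ τ in t₀..u, l τ with hΛ
  set R : ℝ → ℝ := fun u => ∫ τ in t₀..u, (l τ).re with hRdef
  have hΛre : ∀ u ∈ I, (Λ u).re = R u := by
    intro u hu
    have hint : IntervalIntegrable l volume t₀ u := (hl.mono (hsub u hu)).intervalIntegrable
    have := (Complex.reCLM.intervalIntegral_comp_comm hint).symm
    simpa using this
  have hRadd : ∀ t ∈ I, ∀ s ∈ I, (∫ τ in t..s, (l τ).re) = R s - R t := by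
    intro t ht s hs
    rw [eq_sub_iff_add_eq, add_comm]
    exact integral_add_adjacent_intervals
      ((hlre.mono (hsub t ht)).intervalIntegrable)
      ((hlre.mono (hsub2 t ht s hs)).intervalIntegrable)
  have hΛcont : ContinuousOn Λ I := fun u hu =>
    (ftc_within hord hl ht₀ hu).continuousWithinAt
  -- the perturbation kernel integrand
  set g : ℝ → ℂ := fun s => Complex.exp (-Λ s) * q s with hg
  have hg_cont : ContinuousOn g I := ((hΛcont.neg).cexp).mul hq
  have hg_norm : ∀ s ∈ I, ‖g s‖ = Real.exp (-(R s)) * ‖q s‖ := by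
    intro s hs
    rw [hg, norm_mul, Complex.norm_exp]
    congr 2
    rw [Complex.neg_re, hΛre s hs]
  have hgb : ∀ t ∈ I, ∀ s ∈ D t,
      ‖g s‖ ≤ (ε * Real.exp (-(R t))) * Real.exp (-∫ τ in t..s, (l τ).re) := by
    intro t ht s hs
    have hsI : s ∈ I := hIb t ht hs
    rw [hg_norm s hsI, hRadd t ht s hsI]
    have h1 : ‖q s‖ ≤ ε := hqε s hsI
    have h2 : (0:ℝ) < Real.exp (-(R s)) := Real.exp_pos _
    calc Real.exp (-(R s)) * ‖q s‖ ≤ Real.exp (-(R s)) * ε :=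
          mul_le_mul_of_nonneg_left h1 h2.le
      _ = (ε * Real.exp (-(R t))) * Real.exp (-(R s - R t)) := by
          have he : -(R t) + -(R s - R t) = -(R s) := by ring
          rw [mul_assoc, ← Real.exp_add, he]; ring
  have hgint : ∀ t ∈ I, IntegrableOn g (D t) := by
    intro t ht
    refine Integrable.mono' (((hker t ht).const_mul (ε * Real.exp (-(R t))))) ?_ ?_
    · exact (hg_cont.mono (hIb t ht)).aestronglyMeasurable (hD_meas t)
    · exact (ae_restrict_iff' (hD_meas t)).2 (Filter.Eventually.of_forall (hgb t ht))
  -- G and its representation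
  set G : ℝ → ℂ := fun t => ∫ s in D t, g s with hG
  have hkey : ∀ t ∈ I, ∀ t' ∈ I, t ≤ t' → G t = (∫ s in Ioc t t', g s) + G t' := by
    intro t ht t' ht' htt'
    have hsplit : D t = (Ioc t t' ∩ {s : ℝ | (s : EReal) < b}) ∪ D t' := by
      ext s
      simp only [hD, mem_setOf_eq, mem_union, mem_inter_iff, mem_Ioc]
      constructor
      · rintro ⟨h1, h2⟩
        rcases le_or_gt s t' with h | h
        · exact Or.inl ⟨⟨h1, h⟩, h2⟩
        · exact Or.inr ⟨h, h2⟩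
      · rintro (⟨⟨h1, _⟩, h2⟩ | ⟨h1, h2⟩)
        · exact ⟨h1, h2⟩
        · exact ⟨lt_of_le_of_lt htt' h1, h2⟩
    have hdisj : Disjoint (Ioc t t' ∩ {s : ℝ | (s : EReal) < b}) (D t') := by
      refine Set.disjoint_left.2 ?_
      rintro s ⟨hs1, _⟩ hs2
      exact absurd hs2.1 (not_lt.2 hs1.2)
    have hint1 : IntegrableOn g (Ioc t t' ∩ {s : ℝ | (s : EReal) < b}) :=
      (hgint t ht).mono_set (by rw [hsplit]; exact subset_union_left)
    have hae : ((Ioc t t' ∩ {s : ℝ | (s : EReal) < b} : Set ℝ) : Set ℝ) =ᵐ[volume] (Ioc t t' : Set ℝ) := by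
      rw [MeasureTheory.ae_eq_set]
      constructor
      · have : (Ioc t t' ∩ {s : ℝ | (s : EReal) < b}) \ Ioc t t' = ∅ := by
          ext s; simp only [mem_diff, mem_inter_iff, mem_empty_iff_false, iff_false]
          rintro ⟨⟨h1, _⟩, h2⟩; exact h2 h1
        rw [this]; exact measure_empty
      · refine measure_mono_null (fun s hs => ?_) (Real.volume_singleton (a := t'))
        obtain ⟨hs1, hs2⟩ := hs
        simp only [mem_inter_iff, mem_setOf_eq, not_and] at hs2
        have hsb : ¬ ((s : EReal) < b) := hs2 hs1
        have : b ≤ (s : EReal) := not_lt.1 hsb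
        have ht'b : (t' : EReal) ≤ b := hI2 t' ht'
        have : (t' : EReal) ≤ (s : EReal) := le_trans ht'b this
        have : t' ≤ s := by exact_mod_cast this
        simp [le_antisymm hs1.2 this]
    show (∫ s in D t, g s) = (∫ s in Ioc t t', g s) + ∫ s in D t', g s
    rw [hsplit, setIntegral_union hdisj (hD_meas t') hint1
      ((hgint t ht).mono_set (by rw [hsplit]; exact subset_union_right)),
      setIntegral_congr_set hae]
  have hrep : ∀ t ∈ I, G t = G t₀ - ∫ s in t₀..t, g s := by
    intro t ht
    rcases le_total t t₀ with h | h
    · have h2 : (∫ s in t₀..t, g s) = -∫ s in Ioc t t₀, g s := by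
        rw [integral_symm, integral_of_le h]
      rw [hkey t ht t₀ ht₀ h, h2]; ring
    · have h1 := hkey t₀ ht₀ t ht h
      rw [integral_of_le h]
      linear_combination -h1
  have hG_deriv : ∀ t ∈ I, HasDerivWithinAt G (-(g t)) I t := by
    intro t ht
    have h1 := ftc_within hord hg_cont ht₀ ht
    have h2 := (hasDerivWithinAt_const t I (G t₀)).sub h1
    rw [zero_sub] at h2
    exact h2.congr (fun u hu => hrep u hu) (hrep t ht)
  -- the solution
  refine ⟨fun t => φ t + Complex.exp (Λ t) * G t, ?_, ?_⟩
  · intro t ht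
    have hE : HasDerivWithinAt (fun u => Complex.exp (Λ u)) (Complex.exp (Λ t) * l t) I t :=
      (ftc_within hord hl ht₀ ht).cexp
    have hEg : Complex.exp (Λ t) * g t = q t := by
      show Complex.exp (Λ t) * (Complex.exp (-Λ t) * q t) = q t
      rw [← mul_assoc, ← Complex.exp_add, add_neg_cancel, Complex.exp_zero, one_mul]
    have hd := (hφ t ht).add (hE.mul (hG_deriv t ht))
    exact hd.congr_deriv (by linear_combination -hEg)
  · intro t ht
    have h1 : φ t - (φ t + Complex.exp (Λ t) * G t) = -(Complex.exp (Λ t) * G t) := by ring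
    rw [h1, norm_neg, norm_mul, Complex.norm_exp, hΛre t ht]
    have h2 : ‖G t‖ ≤ ∫ s in D t, ‖g s‖ := norm_integral_le_integral_norm _
    have h3 : (∫ s in D t, ‖g s‖) ≤
        ∫ s in D t, (ε * Real.exp (-(R t))) * Real.exp (-∫ τ in t..s, (l τ).re) := by
      refine setIntegral_mono_on (hgint t ht).norm
        ((hker t ht).const_mul _) (hD_meas t) (hgb t ht)
    have h4 : (∫ s in D t, (ε * Real.exp (-(R t))) * Real.exp (-∫ τ in t..s, (l τ).re))
        = (ε * Real.exp (-(R t))) * ∫ s in D t, Real.exp (-∫ τ in t..s, (l τ).re) :=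
      integral_const_mul _ _
    calc Real.exp ((R t)) * ‖G t‖
        ≤ Real.exp (R t) * ((ε * Real.exp (-(R t))) *
            ∫ s in D t, Real.exp (-∫ τ in t..s, (l τ).re)) := by
          refine mul_le_mul_of_nonneg_left ?_ (Real.exp_pos _).le
          rw [← h4]; exact le_trans h2 h3
      _ = ε * ∫ s in D t, Real.exp (-∫ τ in t..s, (l τ).re) := by
          have h5 : Real.exp (R t) * Real.exp (-(R t)) = 1 := by
            rw [← Real.exp_add, add_neg_cancel, Real.exp_zero]
          linear_combination (ε * ∫ s in D t, Real.exp (-∫ τ in t..s, (l τ).re)) * h5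

lemma scalar_left (a : EReal) (I : Set ℝ) (hord : OrdConnected I)
    (hI2 : ∀ x ∈ I, a ≤ (x : EReal))
    (hIa : ∀ t ∈ I, {s : ℝ | a < (s : EReal) ∧ s < t} ⊆ I)
    {t₀ : ℝ} (ht₀ : t₀ ∈ I)
    (l : ℝ → ℂ) (hl : ContinuousOn l I)
    (hker : ∀ t ∈ I, IntegrableOn
      (fun s => Real.exp (∫ τ in s..t, (l τ).re)) {s : ℝ | a < (s : EReal) ∧ s < t})
    {ε : ℝ} (q φ : ℝ → ℂ) (hq : ContinuousOn q I) (hqε : ∀ t ∈ I, ‖q t‖ ≤ ε)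
    (hφ : ∀ t ∈ I, HasDerivWithinAt φ (l t * φ t + q t) I t) :
    ∃ x : ℝ → ℂ, (∀ t ∈ I, HasDerivWithinAt x (l t * x t) I t) ∧
      (∀ t ∈ I, ‖φ t - x t‖ ≤
        ε * ∫ s in {s : ℝ | a < (s : EReal) ∧ s < t}, Real.exp (∫ τ in s..t, (l τ).re)) := by
  set D : ℝ → Set ℝ := fun t => {s : ℝ | a < (s : EReal) ∧ s < t} with hD
  have hD_meas : ∀ t : ℝ, MeasurableSet (D t) := by
    intro t
    have : D t = (fun s : ℝ => (s : EReal)) ⁻¹' (Ioi a) ∩ Iio t := rfl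
    rw [this]
    exact (((continuous_coe_real_ereal.measurable) measurableSet_Ioi)).inter measurableSet_Iio
  have hsub : ∀ t ∈ I, uIcc t₀ t ⊆ I := fun t ht => hord.uIcc_subset ht₀ ht
  have hsub2 : ∀ t ∈ I, ∀ s ∈ I, uIcc t s ⊆ I := fun t ht s hs => hord.uIcc_subset ht hs
  have hlre : ContinuousOn (fun τ => (l τ).re) I := Complex.continuous_re.comp_continuousOn hl
  set Λ : ℝ → ℂ := fun u => ∫ τ in t₀..u, l τ with hΛ
  set R : ℝ → ℝ := fun u => ∫ τ in t₀..u, (l τ).re with hRdef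
  have hΛre : ∀ u ∈ I, (Λ u).re = R u := by
    intro u hu
    have hint : IntervalIntegrable l volume t₀ u := (hl.mono (hsub u hu)).intervalIntegrable
    have := (Complex.reCLM.intervalIntegral_comp_comm hint).symm
    simpa using this
  have hRadd : ∀ t ∈ I, ∀ s ∈ I, (∫ τ in t..s, (l τ).re) = R s - R t := by
    intro t ht s hs
    rw [eq_sub_iff_add_eq, add_comm]
    exact integral_add_adjacent_intervals
      ((hlre.mono (hsub t ht)).intervalIntegrable)
      ((hlre.mono (hsub2 t ht s hs)).intervalIntegrable)
  have hΛcont : ContinuousOn Λ I := fun u hu =>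
    (ftc_within hord hl ht₀ hu).continuousWithinAt
  set g : ℝ → ℂ := fun s => Complex.exp (-Λ s) * q s with hg
  have hg_cont : ContinuousOn g I := ((hΛcont.neg).cexp).mul hq
  have hg_norm : ∀ s ∈ I, ‖g s‖ = Real.exp (-(R s)) * ‖q s‖ := by
    intro s hs
    rw [hg, norm_mul, Complex.norm_exp]
    congr 2
    rw [Complex.neg_re, hΛre s hs]
  have hgb : ∀ t ∈ I, ∀ s ∈ D t,
      ‖g s‖ ≤ (ε * Real.exp (-(R t))) * Real.exp (∫ τ in s..t, (l τ).re) := by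
    intro t ht s hs
    have hsI : s ∈ I := hIa t ht hs
    rw [hg_norm s hsI, hRadd s hsI t ht]
    have h1 : ‖q s‖ ≤ ε := hqε s hsI
    have h2 : (0:ℝ) < Real.exp (-(R s)) := Real.exp_pos _
    calc Real.exp (-(R s)) * ‖q s‖ ≤ Real.exp (-(R s)) * ε :=
          mul_le_mul_of_nonneg_left h1 h2.le
      _ = (ε * Real.exp (-(R t))) * Real.exp (R t - R s) := by
          have he : -(R t) + (R t - R s) = -(R s) := by ring
          rw [mul_assoc, ← Real.exp_add, he]; ring
  have hgint : ∀ t ∈ I, IntegrableOn g (D t) := by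
    intro t ht
    refine Integrable.mono' (((hker t ht).const_mul (ε * Real.exp (-(R t))))) ?_ ?_
    · exact (hg_cont.mono (hIa t ht)).aestronglyMeasurable (hD_meas t)
    · exact (ae_restrict_iff' (hD_meas t)).2 (Filter.Eventually.of_forall (hgb t ht))
  set G : ℝ → ℂ := fun t => ∫ s in D t, g s with hG
  have hkey : ∀ t' ∈ I, ∀ t ∈ I, t' ≤ t → G t = (∫ s in Ioc t' t, g s) + G t' := by
    intro t' ht' t ht htt'
    have hsplit : D t = ({s : ℝ | a < (s : EReal)} ∩ Ico t' t) ∪ D t' := by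
      ext s
      simp only [hD, mem_setOf_eq, mem_union, mem_inter_iff, mem_Ico]
      constructor
      · rintro ⟨h1, h2⟩
        rcases lt_or_ge s t' with h | h
        · exact Or.inr ⟨h1, h⟩
        · exact Or.inl ⟨h1, h, h2⟩
      · rintro (⟨h1, _, h2⟩ | ⟨h1, h2⟩)
        · exact ⟨h1, h2⟩
        · exact ⟨h1, lt_of_lt_of_le h2 htt'⟩
    have hdisj : Disjoint ({s : ℝ | a < (s : EReal)} ∩ Ico t' t) (D t') := by
      refine Set.disjoint_left.2 ?_
      rintro s ⟨_, hs1⟩ hs2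
      exact absurd hs2.2 (not_lt.2 hs1.1)
    have hint1 : IntegrableOn g ({s : ℝ | a < (s : EReal)} ∩ Ico t' t) :=
      (hgint t ht).mono_set (by rw [hsplit]; exact subset_union_left)
    have hae : (({s : ℝ | a < (s : EReal)} ∩ Ico t' t : Set ℝ) : Set ℝ)
        =ᵐ[volume] (Ioc t' t : Set ℝ) := by
      rw [MeasureTheory.ae_eq_set]
      constructor
      · refine measure_mono_null (fun s hs => ?_) (Real.volume_singleton (a := t'))
        obtain ⟨⟨_, hs1, hs2⟩, hs3⟩ := hs
        simp only [mem_Ioc, not_and] at hs3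
        rcases lt_or_ge t' s with h | h
        · exact absurd hs2.le (hs3 h)
        · simp [le_antisymm h hs1]
      · refine measure_mono_null (fun s hs => ?_) (Real.volume_singleton (a := t))
        obtain ⟨⟨hs1, hs2⟩, hs3⟩ := hs
        simp only [mem_inter_iff, mem_setOf_eq, mem_Ico, not_and] at hs3
        have ha_s : a < (s : EReal) := by
          have h1 : a ≤ (t' : EReal) := hI2 t' ht'
          have h2 : (t' : EReal) < (s : EReal) := by exact_mod_cast hs1
          exact lt_of_le_of_lt h1 h2
        have := hs3 ha_s
        rcases lt_or_ge s t with h | h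
        · exact absurd h (by intro hh; exact absurd (hs3 ha_s hs1.le) (by simp [hh]))
        · simp [le_antisymm hs2 h]
    show (∫ s in D t, g s) = (∫ s in Ioc t' t, g s) + ∫ s in D t', g s
    rw [hsplit, setIntegral_union hdisj (hD_meas t') hint1
      ((hgint t ht).mono_set (by rw [hsplit]; exact subset_union_right)),
      setIntegral_congr_set hae]
  have hrep : ∀ t ∈ I, G t = G t₀ + ∫ s in t₀..t, g s := by
    intro t ht
    rcases le_total t₀ t with h | h
    · rw [hkey t₀ ht₀ t ht h, integral_of_le h]; ring
    · have h1 := hkey t ht t₀ ht₀ h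
      have h2 : (∫ s in t₀..t, g s) = -∫ s in Ioc t t₀, g s := by
        rw [integral_symm, integral_of_le h]
      rw [h2]
      linear_combination -h1
  have hG_deriv : ∀ t ∈ I, HasDerivWithinAt G (g t) I t := by
    intro t ht
    have h1 := ftc_within hord hg_cont ht₀ ht
    have h2 := (hasDerivWithinAt_const t I (G t₀)).add h1
    rw [zero_add] at h2
    exact h2.congr (fun u hu => hrep u hu) (hrep t ht)
  refine ⟨fun t => φ t - Complex.exp (Λ t) * G t, ?_, ?_⟩
  · intro t ht
    have hE : HasDerivWithinAt (fun u => Complex.exp (Λ u)) (Complex.exp (Λ t) * l t) I t :=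
      (ftc_within hord hl ht₀ ht).cexp
    have hEg : Complex.exp (Λ t) * g t = q t := by
      show Complex.exp (Λ t) * (Complex.exp (-Λ t) * q t) = q t
      rw [← mul_assoc, ← Complex.exp_add, add_neg_cancel, Complex.exp_zero, one_mul]
    have hd := (hφ t ht).sub (hE.mul (hG_deriv t ht))
    exact hd.congr_deriv (by linear_combination -hEg)
  · intro t ht
    have h1 : φ t - (φ t - Complex.exp (Λ t) * G t) = Complex.exp (Λ t) * G t := by ring
    rw [h1, norm_mul, Complex.norm_exp, hΛre t ht]
    have h2 : ‖G t‖ ≤ ∫ s in D t, ‖g s‖ := norm_integral_le_integral_norm _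
    have h3 : (∫ s in D t, ‖g s‖) ≤
        ∫ s in D t, (ε * Real.exp (-(R t))) * Real.exp (∫ τ in s..t, (l τ).re) :=
      setIntegral_mono_on (hgint t ht).norm ((hker t ht).const_mul _) (hD_meas t) (hgb t ht)
    have h4 : (∫ s in D t, (ε * Real.exp (-(R t))) * Real.exp (∫ τ in s..t, (l τ).re))
        = (ε * Real.exp (-(R t))) * ∫ s in D t, Real.exp (∫ τ in s..t, (l τ).re) :=
      integral_const_mul _ _
    calc Real.exp (R t) * ‖G t‖
        ≤ Real.exp (R t) * ((ε * Real.exp (-(R t))) *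
            ∫ s in D t, Real.exp (∫ τ in s..t, (l τ).re)) := by
          refine mul_le_mul_of_nonneg_left ?_ (Real.exp_pos _).le
          rw [← h4]; exact le_trans h2 h3
      _ = ε * ∫ s in D t, Real.exp (∫ τ in s..t, (l τ).re) := by
          have h5 : Real.exp (R t) * Real.exp (-(R t)) = 1 := by
            rw [← Real.exp_add, add_neg_cancel, Real.exp_zero]
          linear_combination (ε * ∫ s in D t, Real.exp (∫ τ in s..t, (l τ).re)) * h5

lemma sol_form (I : Set ℝ) (hord : OrdConnected I) (l : ℝ → ℂ) (hl : ContinuousOn l I)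
    {t₀ : ℝ} (ht₀ : t₀ ∈ I) (y : ℝ → ℂ)
    (hy : ∀ t ∈ I, HasDerivWithinAt y (l t * y t) I t) :
    ∀ t ∈ I, y t = y t₀ * Complex.exp (∫ τ in t₀..t, l τ) := by
  set Λ : ℝ → ℂ := fun u => ∫ τ in t₀..u, l τ with hΛ
  have hu : ∀ t ∈ I, HasDerivWithinAt (fun t => y t * Complex.exp (-Λ t)) 0 I t := by
    intro t ht
    have hE := ((ftc_within hord hl ht₀ ht).neg).cexp
    have hd := (hy t ht).mul hE
    exact hd.congr_deriv (by ring)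
  have hconv : Convex ℝ I := convex_iff_ordConnected.2 hord
  intro t ht
  have hb := hconv.norm_image_sub_le_of_norm_hasDerivWithin_le
    (f' := fun _ => (0:ℂ)) (C := 0) (fun s hs => hu s hs) (fun s _ => by simp) ht₀ ht
  simp only [norm_zero, zero_mul] at hb
  have heq : y t * Complex.exp (-Λ t) = y t₀ * Complex.exp (-Λ t₀) := by
    have h0 : ‖y t * Complex.exp (-Λ t) - y t₀ * Complex.exp (-Λ t₀)‖ = 0 :=
      le_antisymm hb (norm_nonneg _)
    exact sub_eq_zero.1 (norm_eq_zero.1 h0)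
  have hΛ0 : Λ t₀ = 0 := integral_same
  rw [hΛ0, neg_zero, Complex.exp_zero, mul_one] at heq
  have hx : Complex.exp (-Λ t) * Complex.exp (Λ t) = 1 := by
    rw [← Complex.exp_add]; simp
  calc y t = y t * (Complex.exp (-Λ t) * Complex.exp (Λ t)) := by rw [hx, mul_one]
    _ = (y t * Complex.exp (-Λ t)) * Complex.exp (Λ t) := by ring
    _ = y t₀ * Complex.exp (Λ t) := by rw [heq]

lemma neBot_b (b : EReal) (hb : ⊥ < b) :
    (Filter.comap (fun x : ℝ => (x : EReal)) (nhdsWithin b (Iio b))).NeBot := by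
  induction b with
  | bot => exact absurd hb (lt_irrefl _)
  | coe r =>
    have h1 : Tendsto (fun x : ℝ => (x : EReal)) (𝓝[<] r) (𝓝[Iio (r : EReal)] (r : EReal)) := by
      refine tendsto_nhdsWithin_iff.2 ⟨?_, ?_⟩
      · exact (continuous_coe_real_ereal.tendsto r).mono_left nhdsWithin_le_nhds
      · exact eventually_mem_nhdsWithin.mono (fun x hx => by simpa using (EReal.coe_lt_coe_iff.2 hx))
    exact Filter.neBot_of_le h1.le_comap
  | top =>
    have h1 : Tendsto (fun x : ℝ => (x : EReal)) atTop (𝓝[Iio (⊤ : EReal)] ⊤) := by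
      refine tendsto_nhdsWithin_iff.2 ⟨?_, ?_⟩
      · rw [EReal.tendsto_nhds_top_iff_real]
        intro x
        filter_upwards [eventually_gt_atTop x] with y hy
        exact_mod_cast hy
      · exact Filter.Eventually.of_forall (fun x => EReal.coe_lt_top x)
    exact Filter.neBot_of_le h1.le_comap

lemma neBot_a (a : EReal) (ha : a < ⊤) :
    (Filter.comap (fun x : ℝ => (x : EReal)) (nhdsWithin a (Ioi a))).NeBot := by
  induction a with
  | top => exact absurd ha (lt_irrefl _)
  | coe r =>
    have h1 : Tendsto (fun x : ℝ => (x : EReal)) (𝓝[>] r) (𝓝[Ioi (r : EReal)] (r : EReal)) := by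
      refine tendsto_nhdsWithin_iff.2 ⟨?_, ?_⟩
      · exact (continuous_coe_real_ereal.tendsto r).mono_left nhdsWithin_le_nhds
      · exact eventually_mem_nhdsWithin.mono (fun x hx => by simpa using (EReal.coe_lt_coe_iff.2 hx))
    exact Filter.neBot_of_le h1.le_comap
  | bot =>
    have h1 : Tendsto (fun x : ℝ => (x : EReal)) atBot (𝓝[Ioi (⊥ : EReal)] ⊥) := by
      refine tendsto_nhdsWithin_iff.2 ⟨?_, ?_⟩
      · rw [EReal.tendsto_nhds_bot_iff_real]
        intro x
        filter_upwards [eventually_lt_atBot x] with y hy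
        exact_mod_cast hy
      · exact Filter.Eventually.of_forall (fun x => EReal.bot_lt_coe x)
    exact Filter.neBot_of_le h1.le_comap

end UlamAux

theorem statement5 (a b : EReal) (hab : a < b) (I : Set ℝ)
    (hI1 : ∀ x : ℝ, a < (x : EReal) → (x : EReal) < b → x ∈ I)
    (hI2 : ∀ x ∈ I, a ≤ (x : EReal) ∧ (x : EReal) ≤ b)
    (l1 l2 : ℝ → ℂ) (hl1 : ContinuousOn l1 I) (hl2 : ContinuousOn l2 I)
    (hker1 : ∀ t ∈ I, IntegrableOn
      (fun s => Real.exp (-∫ τ in t..s, (l1 τ).re)) {s : ℝ | t < s ∧ (s : EReal) < b})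
    (hker2 : ∀ t ∈ I, IntegrableOn
      (fun s => Real.exp (∫ τ in s..t, (l2 τ).re)) {s : ℝ | a < (s : EReal) ∧ s < t})
    (hbdd : BddAbove (kappa13 a b l1 l2 '' I)) :
    UlamStable2C I (fun t => !![l1 t, 0; 0, l2 t]) (sSup (kappa13 a b l1 l2 '' I)) ∧
    ((∀ t₀ : ℝ, a < (t₀ : EReal) → (t₀ : EReal) < b →
        (Tendsto (fun t => ∫ s in t₀..t, (l1 s).re)
          (Filter.comap (fun x : ℝ => (x : EReal)) (nhdsWithin b (Iio b))) atTop) ∧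
        (Tendsto (fun t => ∫ s in t₀..t, (l2 s).re)
          (Filter.comap (fun x : ℝ => (x : EReal)) (nhdsWithin a (Ioi a))) atTop)) →
      ∀ ε : ℝ, 0 < ε → ∀ φ φd : ℝ → Fin 2 → ℂ,
        (∀ t ∈ I, HasDerivWithinAt φ (φd t) I t) →
        ContinuousOn φd I →
        (∀ t ∈ I, ‖φd t - (!![l1 t, 0; 0, l2 t]).mulVec (φ t)‖ ≤ ε) →
        ∃ x : ℝ → Fin 2 → ℂ,
          ((∀ t ∈ I, HasDerivWithinAt x ((!![l1 t, 0; 0, l2 t]).mulVec (x t)) I t) ∧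
            ∀ t ∈ I, ‖φ t - x t‖ ≤ sSup (kappa13 a b l1 l2 '' I) * ε) ∧
          ∀ y : ℝ → Fin 2 → ℂ,
            ((∀ t ∈ I, HasDerivWithinAt y ((!![l1 t, 0; 0, l2 t]).mulVec (y t)) I t) ∧
              ∀ t ∈ I, ‖φ t - y t‖ ≤ sSup (kappa13 a b l1 l2 '' I) * ε) →
            EqOn y x I) := by
  classical
  have hord : Set.OrdConnected I := by
    constructor
    intro x hx y hy z hz
    rcases eq_or_lt_of_le hz.1 with h1 | h1
    · exact h1 ▸ hx
    · rcases eq_or_lt_of_le hz.2 with h2 | h2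
      · exact h2 ▸ hy
      · exact hI1 z (lt_of_le_of_lt (hI2 x hx).1 (EReal.coe_lt_coe_iff.2 h1))
          (lt_of_lt_of_le (EReal.coe_lt_coe_iff.2 h2) (hI2 y hy).2)
  obtain ⟨t₀, ht₀a, ht₀b⟩ := EReal.lt_iff_exists_real_btwn.1 hab
  have ht₀ : t₀ ∈ I := hI1 t₀ ht₀a ht₀b
  have hIb : ∀ t ∈ I, {s : ℝ | t < s ∧ (s : EReal) < b} ⊆ I := fun t ht s hs =>
    hI1 s (lt_of_le_of_lt (hI2 t ht).1 (EReal.coe_lt_coe_iff.2 hs.1)) hs.2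
  have hIa : ∀ t ∈ I, {s : ℝ | a < (s : EReal) ∧ s < t} ⊆ I := fun t ht s hs =>
    hI1 s hs.1 (lt_of_lt_of_le (EReal.coe_lt_coe_iff.2 hs.2) (hI2 t ht).2)
  set K := sSup (kappa13 a b l1 l2 '' I) with hKdef
  have hKle : ∀ t ∈ I, kappa13 a b l1 l2 t ≤ K := fun t ht => le_csSup hbdd ⟨t, ht, rfl⟩
  have hmv : ∀ (t : ℝ) (v : Fin 2 → ℂ),
      (!![l1 t, 0; 0, l2 t]).mulVec v = ![l1 t * v 0, l2 t * v 1] := by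
    intro t v
    funext i
    fin_cases i <;> simp [Matrix.mulVec, dotProduct, Fin.sum_univ_two]
  have hKpos : 0 < K := by
    obtain ⟨u, hu1, hu2⟩ := EReal.lt_iff_exists_real_btwn.1 ht₀b
    have hu1' : t₀ < u := EReal.coe_lt_coe_iff.1 hu1
    have hpos : 0 < ∫ s in {s : ℝ | t₀ < s ∧ (s : EReal) < b},
        Real.exp (-∫ τ in t₀..s, (l1 τ).re) := by
      rw [setIntegral_pos_iff_support_of_nonneg_ae
        (Filter.Eventually.of_forall (fun s => (Real.exp_pos _).le)) (hker1 t₀ ht₀)]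
      have hsupp : Function.support (fun s : ℝ => Real.exp (-∫ τ in t₀..s, (l1 τ).re))
          = univ := by
        ext s; simp [Function.mem_support, (Real.exp_pos _).ne']
      rw [hsupp, univ_inter]
      have hsubset : Ioo t₀ u ⊆ {s : ℝ | t₀ < s ∧ (s : EReal) < b} := fun s hs =>
        ⟨hs.1, lt_trans (EReal.coe_lt_coe_iff.2 hs.2) hu2⟩
      refine lt_of_lt_of_le ?_ (measure_mono (μ := volume) hsubset)
      rw [Real.volume_Ioo]
      exact ENNReal.ofReal_pos.2 (sub_pos.2 hu1')
    have h2 : (∫ s in {s : ℝ | t₀ < s ∧ (s : EReal) < b},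
        Real.exp (-∫ τ in t₀..s, (l1 τ).re)) ≤ kappa13 a b l1 l2 t₀ := le_max_left _ _
    exact lt_of_lt_of_le hpos (le_trans h2 (hKle t₀ ht₀))
  -- main existence statement
  have hexist : ∀ ε : ℝ, 0 < ε → ∀ φ φd : ℝ → Fin 2 → ℂ,
      (∀ t ∈ I, HasDerivWithinAt φ (φd t) I t) → ContinuousOn φd I →
      (∀ t ∈ I, ‖φd t - (!![l1 t, 0; 0, l2 t]).mulVec (φ t)‖ ≤ ε) →
      ∃ x : ℝ → Fin 2 → ℂ,
        (∀ t ∈ I, HasDerivWithinAt x ((!![l1 t, 0; 0, l2 t]).mulVec (x t)) I t) ∧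
        ∀ t ∈ I, ‖φ t - x t‖ ≤ K * ε := by
    intro ε hε φ φd hφ hφd hbound
    have hφc : ContinuousOn φ I := fun t ht => (hφ t ht).continuousWithinAt
    set q1 : ℝ → ℂ := fun t => φd t 0 - l1 t * φ t 0 with hq1def
    set q2 : ℝ → ℂ := fun t => φd t 1 - l2 t * φ t 1 with hq2def
    have hsub0 : ∀ t : ℝ, (φd t - (!![l1 t, 0; 0, l2 t]).mulVec (φ t)) 0 = q1 t := by
      intro t; rw [Pi.sub_apply, hmv t (φ t)]; simp [hq1def]
    have hsub1 : ∀ t : ℝ, (φd t - (!![l1 t, 0; 0, l2 t]).mulVec (φ t)) 1 = q2 t := by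
      intro t; rw [Pi.sub_apply, hmv t (φ t)]; simp [hq2def]
    have hq1c : ContinuousOn q1 I :=
      ((continuous_apply (0 : Fin 2)).comp_continuousOn hφd).sub
        (hl1.mul ((continuous_apply (0 : Fin 2)).comp_continuousOn hφc))
    have hq2c : ContinuousOn q2 I :=
      ((continuous_apply (1 : Fin 2)).comp_continuousOn hφd).sub
        (hl2.mul ((continuous_apply (1 : Fin 2)).comp_continuousOn hφc))
    have hq1ε : ∀ t ∈ I, ‖q1 t‖ ≤ ε := fun t ht => by
      rw [← hsub0 t]; exact (norm_le_pi_norm _ 0).trans (hbound t ht)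
    have hq2ε : ∀ t ∈ I, ‖q2 t‖ ≤ ε := fun t ht => by
      rw [← hsub1 t]; exact (norm_le_pi_norm _ 1).trans (hbound t ht)
    have hφ1 : ∀ t ∈ I, HasDerivWithinAt (fun t => φ t 0) (l1 t * φ t 0 + q1 t) I t := by
      intro t ht
      have h := (hasDerivWithinAt_pi.1 (hφ t ht)) 0
      exact h.congr_deriv (by simp [hq1def])
    have hφ2 : ∀ t ∈ I, HasDerivWithinAt (fun t => φ t 1) (l2 t * φ t 1 + q2 t) I t := by
      intro t ht
      have h := (hasDerivWithinAt_pi.1 (hφ t ht)) 1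
      exact h.congr_deriv (by simp [hq2def])
    obtain ⟨x1, hx1d, hx1b⟩ := scalar_right b I hord (fun x hx => (hI2 x hx).2) hIb ht₀
      l1 hl1 hker1 q1 (fun t => φ t 0) hq1c hq1ε hφ1
    obtain ⟨x2, hx2d, hx2b⟩ := scalar_left a I hord (fun x hx => (hI2 x hx).1) hIa ht₀
      l2 hl2 hker2 q2 (fun t => φ t 1) hq2c hq2ε hφ2
    refine ⟨fun t => ![x1 t, x2 t], ?_, ?_⟩
    · intro t ht
      rw [hmv]
      refine hasDerivWithinAt_pi.2 (fun i => ?_)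
      fin_cases i
      · simpa using hx1d t ht
      · simpa using hx2d t ht
    · intro t ht
      have hKε : 0 ≤ K * ε := le_of_lt (mul_pos hKpos hε)
      rw [pi_norm_le_iff_of_nonneg hKε]
      intro i
      fin_cases i
      · have h2 : (∫ s in {s : ℝ | t < s ∧ (s : EReal) < b},
            Real.exp (-∫ τ in t..s, (l1 τ).re)) ≤ K :=
          le_trans (le_max_left _ _) (hKle t ht)
        calc ‖(φ t - ![x1 t, x2 t]) 0‖ = ‖φ t 0 - x1 t‖ := by simp
          _ ≤ ε * ∫ s in {s : ℝ | t < s ∧ (s : EReal) < b},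
              Real.exp (-∫ τ in t..s, (l1 τ).re) := hx1b t ht
          _ ≤ ε * K := mul_le_mul_of_nonneg_left h2 hε.le
          _ = K * ε := mul_comm _ _
      · have h2 : (∫ s in {s : ℝ | a < (s : EReal) ∧ s < t},
            Real.exp (∫ τ in s..t, (l2 τ).re)) ≤ K :=
          le_trans (le_max_right _ _) (hKle t ht)
        calc ‖(φ t - ![x1 t, x2 t]) 1‖ = ‖φ t 1 - x2 t‖ := by simp
          _ ≤ ε * ∫ s in {s : ℝ | a < (s : EReal) ∧ s < t},
              Real.exp (∫ τ in s..t, (l2 τ).re) := hx2b t ht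
          _ ≤ ε * K := mul_le_mul_of_nonneg_left h2 hε.le
          _ = K * ε := mul_comm _ _
  constructor
  · exact ⟨hKpos, fun ε hε φ φd hφ hφd hb => hexist ε hε φ φd hφ hφd hb⟩
  · intro htend ε hε φ φd hφ hφd hbound
    obtain ⟨x, hxd, hxb⟩ := hexist ε hε φ φd hφ hφd hbound
    refine ⟨x, ⟨hxd, fun t ht => hxb t ht⟩, ?_⟩
    · rintro y ⟨hyd, hyb⟩
      -- solution form for components
      have hsol : ∀ z : ℝ → Fin 2 → ℂ,
          (∀ t ∈ I, HasDerivWithinAt z ((!![l1 t, 0; 0, l2 t]).mulVec (z t)) I t) →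
          (∀ t ∈ I, z t 0 = z t₀ 0 * Complex.exp (∫ τ in t₀..t, l1 τ)) ∧
          (∀ t ∈ I, z t 1 = z t₀ 1 * Complex.exp (∫ τ in t₀..t, l2 τ)) := by
        intro z hz
        constructor
        · refine sol_form I hord l1 hl1 ht₀ (fun t => z t 0) (fun t ht => ?_)
          have h := (hasDerivWithinAt_pi.1 (hz t ht)) 0
          rw [hmv t (z t)] at h
          simpa using h
        · refine sol_form I hord l2 hl2 ht₀ (fun t => z t 1) (fun t ht => ?_)
          have h := (hasDerivWithinAt_pi.1 (hz t ht)) 1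
          rw [hmv t (z t)] at h
          simpa using h
      obtain ⟨hy0, hy1⟩ := hsol y hyd
      obtain ⟨hx0, hx1⟩ := hsol x hxd
      have hdiff : ∀ t ∈ I, ‖y t - x t‖ ≤ 2 * (K * ε) := by
        intro t ht
        have he : y t - x t = (φ t - x t) - (φ t - y t) := by abel
        rw [he]
        refine (norm_sub_le _ _).trans ?_
        have h1 := hxb t ht
        have h2 := hyb t ht
        linarith
      have hnormexp : ∀ l : ℝ → ℂ, ContinuousOn l I → ∀ t ∈ I,
          ‖Complex.exp (∫ τ in t₀..t, l τ)‖ = Real.exp (∫ τ in t₀..t, (l τ).re) := by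
        intro l hl t ht
        rw [Complex.norm_exp]
        congr 1
        have hint : IntervalIntegrable l volume t₀ t :=
          ((hl.mono (hord.uIcc_subset ht₀ ht))).intervalIntegrable
        simpa using (Complex.reCLM.intervalIntegral_comp_comm hint).symm
      -- generic vanishing argument
      have hzero : ∀ (i : Fin 2) (l : ℝ → ℂ), ContinuousOn l I →
          (∀ t ∈ I, y t i - x t i
            = (y t₀ i - x t₀ i) * Complex.exp (∫ τ in t₀..t, l τ)) →
          (Tendsto (fun t => ∫ s in t₀..t, (l s).re)
            (Filter.comap (fun x : ℝ => (x : EReal)) (nhdsWithin b (Iio b))) atTop) ∨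
          (Tendsto (fun t => ∫ s in t₀..t, (l s).re)
            (Filter.comap (fun x : ℝ => (x : EReal)) (nhdsWithin a (Ioi a))) atTop) →
          y t₀ i = x t₀ i := by
        intro i l hl hform hT
        by_contra hne
        have hcpos : 0 < ‖y t₀ i - x t₀ i‖ := norm_pos_iff.2 (sub_ne_zero.2 hne)
        have key : ∀ F : Filter ℝ, F.NeBot → (∀ᶠ t in F, t ∈ I) →
            Tendsto (fun t => ∫ s in t₀..t, (l s).re) F atTop → False := by
          intro F hNB hEvI hTF
          have hTT : Tendsto (fun t => ‖y t₀ i - x t₀ i‖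
              * Real.exp (∫ s in t₀..t, (l s).re)) F atTop :=
            (Real.tendsto_exp_atTop.comp hTF).const_mul_atTop hcpos
          have hEvBig := hTT.eventually_gt_atTop (2 * (K * ε))
          obtain ⟨t, htI, hbig⟩ := (hEvI.and hEvBig).exists
          have hbd : ‖y t₀ i - x t₀ i‖ * Real.exp (∫ s in t₀..t, (l s).re)
              ≤ 2 * (K * ε) := by
            calc ‖y t₀ i - x t₀ i‖ * Real.exp (∫ s in t₀..t, (l s).re)
                = ‖(y t₀ i - x t₀ i) * Complex.exp (∫ τ in t₀..t, l τ)‖ := by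
                  rw [norm_mul, hnormexp l hl t htI]
              _ = ‖y t i - x t i‖ := by rw [← hform t htI]
              _ ≤ ‖y t - x t‖ := by
                  simpa using norm_le_pi_norm (y t - x t) i
              _ ≤ 2 * (K * ε) := hdiff t htI
          exact absurd hbd (not_le.2 hbig)
        obtain hT | hT := hT
        · refine key _ (neBot_b b (lt_of_le_of_lt bot_le hab)) ?_ hT
          filter_upwards [preimage_mem_comap
              (mem_nhdsWithin_of_mem_nhds (isOpen_Ioi.mem_nhds hab)),
            preimage_mem_comap (self_mem_nhdsWithin)] with t h1 h2
          exact hI1 t h1 h2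
        · refine key _ (neBot_a a (lt_of_lt_of_le hab le_top)) ?_ hT
          filter_upwards [preimage_mem_comap
              (mem_nhdsWithin_of_mem_nhds (isOpen_Iio.mem_nhds hab)),
            preimage_mem_comap (self_mem_nhdsWithin)] with t h1 h2
          exact hI1 t h2 h1
      have hc1 : y t₀ 0 = x t₀ 0 := by
        refine hzero 0 l1 hl1 (fun t ht => ?_) (Or.inl (htend t₀ ht₀a ht₀b).1)
        rw [hy0 t ht, hx0 t ht]; ring
      have hc2 : y t₀ 1 = x t₀ 1 := by
        refine hzero 1 l2 hl2 (fun t ht => ?_) (Or.inr (htend t₀ ht₀a ht₀b).2)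
        rw [hy1 t ht, hx1 t ht]; ring
      intro t ht
      funext i
      fin_cases i
      · show y t 0 = x t 0
        rw [hy0 t ht, hx0 t ht, hc1]
      · show y t 1 = x t 1
        rw [hy1 t ht, hx1 t ht, hc2]
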